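/- Let K be a field of characteristic p, F = K((π)), and let f, u ∈ F with v the π-adic valuation, u a unit, and e, m positive integers with p ∤ em. If τ = u·π^e, then for any n-form ω_n ∈ Ω^n_K, the class of ω_n/τ^m in U_m/U_{m-1} of H^{n+1}_p(K((τ))) maps under extension of scalars to the class of ū^{-m}·ω_n/π^{em} in U_{em}/U_{em-1} of H^{n+1}_p(K((π))), i.e., extension of scalars on the graded quotient Ω^n_{K̄} is multiplication by ū^{-m}. -/

import Mathlib

set_option synthInstance.maxHeartbeats 400000
set_option maxHeartbeats 1000000

theorem aux_sum_order_nonneg {K : Type} [Field K] {ι : Type*} (s : Finset ι)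
    (f : ι → HahnSeries ℤ K) (h : ∀ i ∈ s, 0 ≤ (f i).order) :
    0 ≤ (∑ i ∈ s, f i).order := by
  classical
  induction s using Finset.induction with
  | empty => simp
  | insert _ _ hi ih =>
      rename_i a s
      rw [Finset.sum_insert hi]
      rcases eq_or_ne (f a + ∑ i ∈ s, f i) 0 with h0 | h0
      · rw [h0, HahnSeries.order_zero]
      · exact le_trans (le_min (h a (Finset.mem_insert_self a s))
          (ih fun i hi' => h i (Finset.mem_insert_of_mem hi')))
          (HahnSeries.min_order_le_order_add h0)

theorem aux_order_inv {K : Type} [Field K] (x : LaurentSeries K) (hx : x ≠ 0) :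
    (x⁻¹).order = -x.order := by
  have h1 : (x * x⁻¹).order = x.order + x⁻¹.order :=
    HahnSeries.order_mul hx (inv_ne_zero hx)
  rw [mul_inv_cancel₀ hx, HahnSeries.order_one] at h1
  linarith

/-- The subgroup of `n`-forms by which one quotients to obtain `H^{n+1}_p(F)`:
generated by the exact forms `dc₁ ∧ ⋯ ∧ dc_n` and the image of the Artin–Schreier–Kato
operator `(a^p − a)·(db₁/b₁) ∧ ⋯ ∧ (db_n/b_n)`. -/
noncomputable def hRel (p : ℕ) (F : Type) [Field F] (n : ℕ) :
    AddSubgroup (ExteriorAlgebra F (KaehlerDifferential ℤ F)) :=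
  AddSubgroup.closure
    ({x | ∃ c : Fin n → F,
        x = ExteriorAlgebra.ιMulti F n fun i => KaehlerDifferential.D ℤ F (c i)} ∪
     {x | ∃ (a : F) (b : Fin n → F), (∀ i, b i ≠ 0) ∧
        x = (a ^ p - a) • ExteriorAlgebra.ιMulti F n
          fun i => (b i)⁻¹ • KaehlerDifferential.D ℤ F (b i)})

/-- Let `K` be a field of characteristic `p` and `F = K((π))`.  Let `u` be a
unit with residue `u₀` and `τ = u·π^e`, and let `m, e > 0` with `p ∤ em`.  For any `n`-form
`ω_n` defined over the residue field `K`, the classes of `ω_n/τ^m` and of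
`ū^{-m}·ω_n/π^{em}` agree in `U_{em}/U_{em-1}` of `H^{n+1}_p(K((π)))`: their difference lies
in `U_{em-1}` (modulo the defining relations of `H^{n+1}_p`).  In other words, extension of
scalars on the graded quotient `Ω^n_{K̄}` is multiplication by `ū^{-m}`. -/
theorem izhboldin_graded_extension_of_scalars
    (p : ℕ) [Fact p.Prime] (K : Type) [Field K] [CharP K p]
    (F : Type) [Field F] [CharP F p] (e : F ≃+* LaurentSeries K)
    (C : K →+* F) (hC : ∀ a : K, e (C a) = HahnSeries.C a)
    (π : F) (hπ : e π = HahnSeries.single (1 : ℤ) (1 : K))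
    (e₀ m n : ℕ) (he₀ : 0 < e₀) (hm : 0 < m) (hpem : ¬ p ∣ e₀ * m)
    (u : F) (hu0 : u ≠ 0) (u₀ : K) (hu₀ : u₀ ≠ 0)
    (hu : u - C u₀ = 0 ∨ 0 < (e (u - C u₀)).order)
    (τ : F) (hτ : τ = u * π ^ e₀)
    (ω : ExteriorAlgebra F (KaehlerDifferential ℤ F))
    (hω : ω ∈ AddSubgroup.closure
      {x | ∃ (a : K) (b : Fin n → K), (∀ i, b i ≠ 0) ∧
        x = (C a) • ExteriorAlgebra.ιMulti F n
          fun i => (C (b i))⁻¹ • KaehlerDifferential.D ℤ F (C (b i))}) :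
    (τ ^ (-(m : ℤ))) • ω - ((C (u₀⁻¹ ^ m)) * π ^ (-((e₀ * m : ℕ) : ℤ))) • ω ∈
      (AddSubgroup.closure
        {x | ∃ (f : F) (g : Fin n → F), (∀ i, g i ≠ 0) ∧
          (f = 0 ∨ -((e₀ * m : ℕ) : ℤ) + 1 ≤ (e f).order) ∧
          x = f • ExteriorAlgebra.ιMulti F n
            fun i => (g i)⁻¹ • KaehlerDifferential.D ℤ F (g i)}) ⊔
      hRel p F n := by
    classical
  -- basic nonvanishing facts
  have hπ0 : π ≠ 0 := by
    intro h
    apply one_ne_zero (α := K)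
    have := hπ
    rw [h, map_zero] at this
    have h2 := congrArg (fun x : LaurentSeries K => x.coeff 1) this
    simpa using h2.symm
  have hez : ∀ x : F, x ≠ 0 → e x ≠ 0 :=
    fun x hx hz => hx (e.injective (by rw [hz, map_zero]))
  have hCu₀ : C u₀ ≠ 0 := fun h => hu₀ ((map_eq_zero C).mp h)
  have hum : u ^ m ≠ 0 := pow_ne_zero _ hu0
  have hCum : C u₀ ^ m ≠ 0 := pow_ne_zero _ hCu₀
  have hπem : π ^ (e₀ * m) ≠ 0 := pow_ne_zero _ hπ0
  -- set c
  set c : F := τ ^ (-(m : ℤ)) - C (u₀⁻¹ ^ m) * π ^ (-((e₀ * m : ℕ) : ℤ)) with hc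
  -- algebraic identity
  have hc_eq : c = (C u₀ ^ m - u ^ m) *
      ((u ^ m)⁻¹ * (C u₀ ^ m)⁻¹ * (π ^ (e₀ * m))⁻¹) := by
    rw [hc, hτ, zpow_neg, zpow_natCast, zpow_neg, zpow_natCast, map_pow, map_inv₀]
    rw [inv_pow]
    field_simp
    ring
  -- orders of basic elements
  have horder_u : (e u).order = 0 := by
    rcases hu with h | h
    · rw [sub_eq_zero.mp h, hC, HahnSeries.order_C]
    · have hδ : e (u - C u₀) ≠ 0 := by
        intro h0; rw [h0, HahnSeries.order_zero] at h; exact lt_irrefl _ h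
      have hsplit : e u = HahnSeries.C u₀ + e (u - C u₀) := by
        rw [← hC]; rw [← map_add]; congr 1; ring
      have hcoeff : (e u).coeff 0 = u₀ := by
        rw [hsplit, HahnSeries.coeff_add]
        rw [HahnSeries.coeff_eq_zero_of_lt_order h]
        simp [HahnSeries.C_apply, HahnSeries.coeff_single_same]
      have heu0 : e u ≠ 0 := by
        intro h0; rw [h0] at hcoeff; simp at hcoeff; exact hu₀ hcoeff.symm
      have hle : (e u).order ≤ 0 := HahnSeries.order_le_of_coeff_ne_zero
        (by rw [hcoeff]; exact hu₀)
      have hge : 0 ≤ (e u).order := by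
        rw [hsplit]
        refine le_trans (le_min ?_ (le_of_lt h)) (HahnSeries.min_order_le_order_add ?_)
        · rw [HahnSeries.order_C]
        · rw [← hsplit]; exact heu0
      omega
  have horder_Cu : (e (C u₀)).order = 0 := by rw [hC, HahnSeries.order_C]
  have horder_π : (e π).order = 1 := by rw [hπ, HahnSeries.order_single one_ne_zero]
  -- order bound on c (or c = 0)
  have hcP : c = 0 ∨ -((e₀ * m : ℕ) : ℤ) + 1 ≤ (e c).order := by
    rcases eq_or_ne (C u₀ ^ m - u ^ m) 0 with h0 | h0
    · left; rw [hc_eq, h0, zero_mul]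
    · right
      -- order of the difference part is ≥ 1
      have hdiff : 1 ≤ (e (C u₀ ^ m - u ^ m)).order := by
        rcases hu with h | h
        · exfalso; apply h0; rw [sub_eq_zero.mp h]; ring
        · have hδ0 : u - C u₀ ≠ 0 := by
            intro hz
            rw [hz, map_zero, HahnSeries.order_zero] at h; exact lt_irrefl _ h
          have hgeom : (∑ i ∈ Finset.range m, u ^ i * C u₀ ^ (m - 1 - i)) * (u - C u₀)
              = u ^ m - C u₀ ^ m := geom_sum₂_mul u (C u₀) m
          have hrw : C u₀ ^ m - u ^ m
              = -((∑ i ∈ Finset.range m, u ^ i * C u₀ ^ (m - 1 - i)) * (u - C u₀)) := by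
            rw [hgeom]; ring
          have hs0 : (∑ i ∈ Finset.range m, u ^ i * C u₀ ^ (m - 1 - i)) ≠ 0 := by
            intro hz
            apply h0
            rw [hrw, hz, zero_mul, neg_zero]
          have hes0 : e (∑ i ∈ Finset.range m, u ^ i * C u₀ ^ (m - 1 - i)) ≠ 0 := hez _ hs0
          have heδ0 : e (u - C u₀) ≠ 0 := hez _ hδ0
          have hesum : 0 ≤ (e (∑ i ∈ Finset.range m, u ^ i * C u₀ ^ (m - 1 - i))).order := by
            rw [map_sum]
            refine aux_sum_order_nonneg _ _ fun i _ => ?_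
            rw [map_mul, map_pow, map_pow]
            rcases eq_or_ne ((e u) ^ i * (e (C u₀)) ^ (m - 1 - i)) 0 with hz | hz
            · rw [hz, HahnSeries.order_zero]
            · rw [HahnSeries.order_mul (pow_ne_zero _ (hez _ hu0))
                (pow_ne_zero _ (hez _ hCu₀)),
                HahnSeries.order_pow, HahnSeries.order_pow, horder_u, horder_Cu]
              simp
          calc (1 : ℤ) ≤ 0 + (e (u - C u₀)).order := by omega
          _ ≤ (e (∑ i ∈ Finset.range m, u ^ i * C u₀ ^ (m - 1 - i))).order
              + (e (u - C u₀)).order := by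
            exact add_le_add_left hesum _
          _ = (e ((∑ i ∈ Finset.range m, u ^ i * C u₀ ^ (m - 1 - i)) * (u - C u₀))).order := by
            rw [map_mul, HahnSeries.order_mul hes0 heδ0]
          _ = (e (C u₀ ^ m - u ^ m)).order := by
            rw [hrw, map_neg, HahnSeries.order_neg]
      -- orders of inverse factors
      have h1 : (e ((u ^ m)⁻¹)).order = 0 := by
        rw [map_inv₀, aux_order_inv _ (hez _ hum), map_pow,
          HahnSeries.order_pow, horder_u]
        simp
      have h2 : (e ((C u₀ ^ m)⁻¹)).order = 0 := by
        rw [map_inv₀, aux_order_inv _ (hez _ hCum), map_pow,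
          HahnSeries.order_pow, horder_Cu]
        simp
      have h3 : (e ((π ^ (e₀ * m))⁻¹)).order = -((e₀ * m : ℕ) : ℤ) := by
        rw [map_inv₀, aux_order_inv _ (hez _ hπem), map_pow,
          HahnSeries.order_pow, horder_π]
        simp
      have he0 : e (C u₀ ^ m - u ^ m) ≠ 0 := hez _ h0
      have hiu : e ((u ^ m)⁻¹) ≠ 0 := hez _ (inv_ne_zero hum)
      have hiC : e ((C u₀ ^ m)⁻¹) ≠ 0 := hez _ (inv_ne_zero hCum)
      have hiπ : e ((π ^ (e₀ * m))⁻¹) ≠ 0 := hez _ (inv_ne_zero hπem)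
      rw [hc_eq, map_mul, map_mul, map_mul,
        HahnSeries.order_mul he0 (mul_ne_zero (mul_ne_zero hiu hiC) hiπ),
        HahnSeries.order_mul (mul_ne_zero hiu hiC) hiπ,
        HahnSeries.order_mul hiu hiC, h1, h2, h3]
      omega
  -- reduce goal to c • ω ∈ ⊔
  rw [← sub_smul, ← hc]
  -- closure induction
  refine AddSubgroup.closure_induction
    (p := fun x _ => c • x ∈ (AddSubgroup.closure
        {x | ∃ (f : F) (g : Fin n → F), (∀ i, g i ≠ 0) ∧
          (f = 0 ∨ -((e₀ * m : ℕ) : ℤ) + 1 ≤ (e f).order) ∧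
          x = f • ExteriorAlgebra.ιMulti F n
            fun i => (g i)⁻¹ • KaehlerDifferential.D ℤ F (g i)}) ⊔ hRel p F n)
    ?_ ?_ ?_ ?_ hω
  · rintro x ⟨a, b, hb, rfl⟩
    apply AddSubgroup.mem_sup_left
    apply AddSubgroup.subset_closure
    refine ⟨c * C a, fun i => C (b i), fun i => (map_ne_zero C).mpr (hb i), ?_, by
      rw [smul_smul]⟩
    rcases eq_or_ne c 0 with hc0 | hc0
    · left; rw [hc0, zero_mul]
    rcases eq_or_ne a 0 with ha | ha
    · left; rw [ha, map_zero, mul_zero]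
    · right
      have h : -((e₀ * m : ℕ) : ℤ) + 1 ≤ (e c).order := hcP.resolve_left hc0
      have hec : e c ≠ 0 := hez _ hc0
      have heCa : e (C a) ≠ 0 := hez _ ((map_ne_zero C).mpr ha)
      rw [map_mul, HahnSeries.order_mul hec heCa, hC, HahnSeries.order_C, add_zero]
      exact h
  · rw [smul_zero]; exact zero_mem _
  · intro x y _ _ hx hy
    rw [smul_add]; exact add_mem hx hy
  · intro x _ hx
    rw [smul_neg]; exact neg_mem hx
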